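/- Let (V, Q) be an FBAS that has at least one quorum and enjoys quorum intersection, and whose top tier T is self-centered, i.e., for every v ∈ T and every slice q ∈ Q(v), q ⊆ T. Let Q′ be any quorum function on V (with every slice in Q′(v) containing v) such that Q′(v) = Q(v) for all v ∈ T. If the FBAS (V, Q′) enjoys quorum intersection, then the set of minimal quorums of (V, Q′) equals the set of minimal quorums of (V, Q), and in particular the top tier of (V, Q′) equals T. Hence no change of only the quorum sets of non-top-tier nodes can produce a new top tier T′ ≠ T while preserving quorum intersection. -/
import Mathlib


open Finset

variable {α : Type*} [DecidableEq α]

/-- `U` is a quorum of the FBAS `(V, Q)`: a nonempty subset of `V` containing,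
for every member `v`, some slice `q ∈ Q v` with `q ⊆ U`. -/
def IsQuorum (V : Finset α) (Q : α → Finset (Finset α)) (U : Finset α) : Prop :=
  U ⊆ V ∧ U.Nonempty ∧ ∀ v ∈ U, ∃ q ∈ Q v, q ⊆ U

/-- A minimal quorum: a quorum none of whose proper subsets is a quorum. -/
def IsMinimalQuorum (V : Finset α) (Q : α → Finset (Finset α)) (U : Finset α) : Prop :=
  IsQuorum V Q U ∧ ∀ U' ⊂ U, ¬IsQuorum V Q U'

/-- A blocking set: a subset of `V` intersecting every quorum of `(V, Q)`. -/
def IsBlocking (V : Finset α) (Q : α → Finset (Finset α)) (B : Finset α) : Prop :=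
  B ⊆ V ∧ ∀ U, IsQuorum V Q U → (B ∩ U).Nonempty

/-- A minimal blocking set: a blocking set none of whose proper subsets is blocking. -/
def IsMinimalBlocking (V : Finset α) (Q : α → Finset (Finset α)) (B : Finset α) : Prop :=
  IsBlocking V Q B ∧ ∀ B' ⊂ B, ¬IsBlocking V Q B'

/-- A splitting set: a subset of `V` containing the intersection of two distinct quorums. -/
def IsSplitting (V : Finset α) (Q : α → Finset (Finset α)) (S : Finset α) : Prop :=
  S ⊆ V ∧ ∃ U₁ U₂, IsQuorum V Q U₁ ∧ IsQuorum V Q U₂ ∧ U₁ ≠ U₂ ∧ U₁ ∩ U₂ ⊆ S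

/-- A minimal splitting set: a splitting set none of whose proper subsets is splitting. -/
def IsMinimalSplitting (V : Finset α) (Q : α → Finset (Finset α)) (S : Finset α) : Prop :=
  IsSplitting V Q S ∧ ∀ S' ⊂ S, ¬IsSplitting V Q S'

/-- Well-formedness of an FBAS `(V, Q)`: every slice of every node `v ∈ V`
contains `v` and is a subset of `V`. -/
def WellFormed (V : Finset α) (Q : α → Finset (Finset α)) : Prop :=
  ∀ v ∈ V, ∀ q ∈ Q v, v ∈ q ∧ q ⊆ V

/-- `T` is the top tier of `(V, Q)`: the union of all minimal quorums. -/
def IsTopTier (V : Finset α) (Q : α → Finset (Finset α)) (T : Finset α) : Prop :=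
  ∀ v, v ∈ T ↔ ∃ U, IsMinimalQuorum V Q U ∧ v ∈ U

/-- `(V, Q)` enjoys quorum intersection: any two quorums share a node. -/
def QuorumIntersection (V : Finset α) (Q : α → Finset (Finset α)) : Prop :=
  ∀ U₁ U₂, IsQuorum V Q U₁ → IsQuorum V Q U₂ → (U₁ ∩ U₂).Nonempty

/-- Every quorum contains a minimal quorum. -/
lemma exists_minimal_quorum_subset (V : Finset α) (Q : α → Finset (Finset α)) :
    ∀ U, IsQuorum V Q U → ∃ M, M ⊆ U ∧ IsMinimalQuorum V Q M := by
  intro U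
  induction U using Finset.strongInduction with
  | _ U ih =>
    intro hU
    by_cases h : ∀ U' ⊂ U, ¬IsQuorum V Q U'
    · exact ⟨U, Finset.Subset.refl U, hU, h⟩
    · push_neg at h
      obtain ⟨U', hsub, hU'⟩ := h
      obtain ⟨M, hM, hMin⟩ := ih U' hsub hU'
      exact ⟨M, hM.trans hsub.subset, hMin⟩

/-- with a self-centered top tier `T`, no change of only the
quorum sets of non-top-tier nodes can alter the set of minimal quorums (and
hence the top tier) while preserving quorum intersection. -/
theorem no_bottom_up_top_tier_change
    (V : Finset α) (Q Q' : α → Finset (Finset α))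
    (hwf : WellFormed V Q) (hwf' : WellFormed V Q')
    (havail : ∃ U, IsQuorum V Q U) (hQI : QuorumIntersection V Q)
    (T : Finset α) (hT : IsTopTier V Q T)
    (hself : ∀ v ∈ T, ∀ q ∈ Q v, q ⊆ T)
    (hsame : ∀ v ∈ T, Q' v = Q v)
    (hQI' : QuorumIntersection V Q') :
    (∀ U, IsMinimalQuorum V Q' U ↔ IsMinimalQuorum V Q U) ∧ IsTopTier V Q' T := by
  -- quorums inside T are the same for Q and Q'
  have hqiff : ∀ U, U ⊆ T → (IsQuorum V Q U ↔ IsQuorum V Q' U) := by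
    intro U hUT
    constructor
    · rintro ⟨h1, h2, h3⟩
      refine ⟨h1, h2, fun v hv => ?_⟩
      rw [hsame v (hUT hv)]; exact h3 v hv
    · rintro ⟨h1, h2, h3⟩
      refine ⟨h1, h2, fun v hv => ?_⟩
      have := h3 v hv; rwa [hsame v (hUT hv)] at this
  -- a minimal Q-quorum is a subset of T
  have hminT : ∀ U, IsMinimalQuorum V Q U → U ⊆ T := by
    intro U hU v hv
    exact (hT v).2 ⟨U, hU, hv⟩
  -- minimal Q-quorums are minimal Q'-quorums
  have hQQ' : ∀ U, IsMinimalQuorum V Q U → IsMinimalQuorum V Q' U := by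
    intro U hU
    have hUT := hminT U hU
    refine ⟨(hqiff U hUT).1 hU.1, fun U' hU' hq => ?_⟩
    exact hU.2 U' hU' ((hqiff U' (hU'.subset.trans hUT)).2 hq)
  -- there is a minimal Q-quorum; it is a Q'-quorum inside T
  obtain ⟨U₀g, hU₀g⟩ := havail
  obtain ⟨U₀, -, hU₀⟩ := exists_minimal_quorum_subset V Q U₀g hU₀g
  have hU₀T := hminT U₀ hU₀
  have hU₀' : IsQuorum V Q' U₀ := (hqiff U₀ hU₀T).1 hU₀.1
  -- a minimal Q'-quorum is a subset of T
  have hminT' : ∀ U, IsMinimalQuorum V Q' U → U ⊆ T := by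
    intro U hU
    obtain ⟨hq, hmin⟩ := hU
    have hne : (U ∩ T).Nonempty := by
      obtain ⟨x, hx⟩ := hQI' U U₀ hq hU₀'
      simp only [Finset.mem_inter] at hx
      exact ⟨x, Finset.mem_inter.2 ⟨hx.1, hU₀T hx.2⟩⟩
    have hqUT : IsQuorum V Q' (U ∩ T) := by
      refine ⟨(Finset.inter_subset_left).trans hq.1, hne, fun v hv => ?_⟩
      simp only [Finset.mem_inter] at hv
      obtain ⟨q, hqm, hqs⟩ := hq.2.2 v hv.1
      refine ⟨q, hqm, Finset.subset_inter hqs ?_⟩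
      exact hself v hv.2 q (by rwa [hsame v hv.2] at hqm)
    by_contra hUT
    refine hmin (U ∩ T) ?_ hqUT
    exact Finset.ssubset_iff_subset_ne.2 ⟨Finset.inter_subset_left,
      fun h => hUT (by rw [← h]; exact Finset.inter_subset_right)⟩
  -- minimal Q'-quorums are minimal Q-quorums
  have hQ'Q : ∀ U, IsMinimalQuorum V Q' U → IsMinimalQuorum V Q U := by
    intro U hU
    have hUT := hminT' U hU
    refine ⟨(hqiff U hUT).2 hU.1, fun U' hU' hq => ?_⟩
    exact hU.2 U' hU' ((hqiff U' (hU'.subset.trans hUT)).1 hq)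
  have hiff : ∀ U, IsMinimalQuorum V Q' U ↔ IsMinimalQuorum V Q U :=
    fun U => ⟨hQ'Q U, hQQ' U⟩
  refine ⟨hiff, fun v => ?_⟩
  rw [hT v]
  constructor
  · rintro ⟨U, hU, hv⟩; exact ⟨U, (hiff U).2 hU, hv⟩
  · rintro ⟨U, hU, hv⟩; exact ⟨U, (hiff U).1 hU, hv⟩
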